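/- (Theorem 1(i)) Assume W > 0 and 4I < zW. Then H_i^0 attains its minimum over all ion configurations at exactly two configurations: the configuration with n_{x,σ} = 1 for all x ∈ Λᵉ and all σ and n_{x,σ} = 0 for all x ∈ Λᵒ and all σ, and the configuration obtained by exchanging the roles of Λᵉ and Λᵒ. That is, each site of one sublattice is occupied by all r ions while the complementary sublattice is empty. -/
import Mathlib


open Finset

/-- Occupation number (0 or 1) attached to a Boolean occupancy variable. -/
noncomputable def occ (b : Bool) : ℝ := if b then 1 else 0

/-- Total number of ions at site `x` (as a real number): `n_x = Σ_σ n_{x,σ}`. -/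
noncomputable def nsite {V : Type*} {r : ℕ} (C : V → Fin r → Bool) (x : V) : ℝ :=
  ∑ σ : Fin r, occ (C x σ)

/-- Total number of ions at site `x` (as a natural number). -/
def nnat {V : Type*} {r : ℕ} (C : V → Fin r → Bool) (x : V) : ℕ :=
  ∑ σ : Fin r, (if C x σ then 1 else 0)

/-- The classical Hamiltonian
`H_i^0(C) = 2I Σ_x Σ_{σ'<σ''} (n_{x,σ'} - 1/2)(n_{x,σ''} - 1/2)
          + (W/2) Σ_{⟨x,y⟩} (n_x - r/2)(n_y - r/2)`,
where the sum over edges `⟨x,y⟩` (each edge counted once) is written as half the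
symmetric double sum over ordered adjacent pairs. -/
noncomputable def H0 {V : Type*} [Fintype V] (G : SimpleGraph V) [DecidableRel G.Adj]
    (r : ℕ) (I W : ℝ) (C : V → Fin r → Bool) : ℝ :=
  2 * I * ∑ x : V, ∑ p ∈ Finset.univ.filter (fun p : Fin r × Fin r => p.1 < p.2),
      (occ (C x p.1) - 1 / 2) * (occ (C x p.2) - 1 / 2)
  + W / 2 * ((∑ x : V, ∑ y : V,
      (if G.Adj x y then (nsite C x - r / 2) * (nsite C y - r / 2) else 0)) / 2)

lemma pairIdentity {r : ℕ} (a : Fin r → ℝ) :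
    2 * ∑ p ∈ Finset.univ.filter (fun p : Fin r × Fin r => p.1 < p.2), a p.1 * a p.2
      = (∑ σ, a σ)^2 - ∑ σ, (a σ)^2 := by
  have h1 : (∑ σ, a σ)^2 = ∑ p : Fin r × Fin r, a p.1 * a p.2 := by
    rw [sq, Finset.sum_mul_sum, Fintype.sum_prod_type]
  have h2 : (∑ p ∈ Finset.univ.filter (fun p : Fin r × Fin r => p.1 < p.2), a p.1 * a p.2)
      + ∑ p ∈ Finset.univ.filter (fun p : Fin r × Fin r => ¬ p.1 < p.2), a p.1 * a p.2
      = ∑ p : Fin r × Fin r, a p.1 * a p.2 :=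
    Finset.sum_filter_add_sum_filter_not _ _ _
  have h3 : (Finset.univ.filter (fun p : Fin r × Fin r => ¬ p.1 < p.2))
      = (Finset.univ.filter (fun p : Fin r × Fin r => p.1 = p.2))
        ∪ (Finset.univ.filter (fun p : Fin r × Fin r => p.2 < p.1)) := by
    ext ⟨i, j⟩
    simp only [Finset.mem_filter, Finset.mem_union, Finset.mem_univ, true_and, Fin.lt_def,
      Fin.ext_iff]
    omega
  have hdisj : Disjoint (Finset.univ.filter (fun p : Fin r × Fin r => p.1 = p.2))
      (Finset.univ.filter (fun p : Fin r × Fin r => p.2 < p.1)) := by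
    rw [Finset.disjoint_left]
    rintro ⟨i, j⟩ hij hji
    simp only [Finset.mem_filter, Finset.mem_univ, true_and] at hij hji
    exact absurd (hij ▸ hji) (lt_irrefl _)
  have h4 : ∑ p ∈ Finset.univ.filter (fun p : Fin r × Fin r => p.1 = p.2), a p.1 * a p.2
      = ∑ σ, (a σ)^2 := by
    refine Finset.sum_bij' (fun p _ => p.1) (fun σ _ => (σ, σ)) ?_ ?_ ?_ ?_ ?_
    · intro p hp; exact Finset.mem_univ _
    · intro σ _; simp
    · intro p hp
      simp only [Finset.mem_filter, Finset.mem_univ, true_and] at hp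
      simp [Prod.ext_iff, hp]
    · intro σ _; rfl
    · intro p hp
      simp only [Finset.mem_filter, Finset.mem_univ, true_and] at hp
      rw [← hp, sq]
  have h5 : ∑ p ∈ Finset.univ.filter (fun p : Fin r × Fin r => p.2 < p.1), a p.1 * a p.2
      = ∑ p ∈ Finset.univ.filter (fun p : Fin r × Fin r => p.1 < p.2), a p.1 * a p.2 := by
    refine Finset.sum_bij' (fun p _ => Prod.swap p) (fun p _ => Prod.swap p) ?_ ?_ ?_ ?_ ?_
    · intro p hp; simp only [Finset.mem_filter, Finset.mem_univ, true_and] at hp ⊢; exact hp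
    · intro p hp; simp only [Finset.mem_filter, Finset.mem_univ, true_and] at hp ⊢; exact hp
    · intro p _; simp
    · intro p _; simp
    · intro p _; exact mul_comm _ _
  rw [h1, ← h2, h3, Finset.sum_union hdisj, h4, h5]
  ring

lemma nsite_eq_nnat {V : Type*} {r : ℕ} (C : V → Fin r → Bool) (x : V) :
    nsite C x = (nnat C x : ℝ) := by
  unfold nsite nnat occ
  push_cast
  refine Finset.sum_congr rfl fun σ _ => ?_
  split <;> simp

lemma nsite_nonneg {V : Type*} {r : ℕ} (C : V → Fin r → Bool) (x : V) : 0 ≤ nsite C x := by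
  rw [nsite_eq_nnat]; positivity

lemma nnat_le {V : Type*} {r : ℕ} (C : V → Fin r → Bool) (x : V) : nnat C x ≤ r := by
  unfold nnat
  calc ∑ σ : Fin r, (if C x σ then 1 else 0) ≤ ∑ _σ : Fin r, 1 :=
        Finset.sum_le_sum fun σ _ => by split <;> omega
    _ = r := by simp

lemma nsite_le {V : Type*} {r : ℕ} (C : V → Fin r → Bool) (x : V) : nsite C x ≤ r := by
  rw [nsite_eq_nnat]; exact_mod_cast nnat_le C x

lemma sitesum {V : Type*} {r : ℕ} (C : V → Fin r → Bool) (x : V) :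
    ∑ p ∈ Finset.univ.filter (fun p : Fin r × Fin r => p.1 < p.2),
      (occ (C x p.1) - 1 / 2) * (occ (C x p.2) - 1 / 2)
    = ((nsite C x - r / 2)^2 - r / 4) / 2 := by
  have hId := pairIdentity (fun σ => occ (C x σ) - 1 / 2)
  have hsum : ∑ σ : Fin r, (occ (C x σ) - 1 / 2) = nsite C x - r / 2 := by
    rw [Finset.sum_sub_distrib, nsite]
    simp only [Finset.sum_const, Finset.card_univ, Fintype.card_fin, nsmul_eq_mul]
    ring
  have hsq : ∑ σ : Fin r, (occ (C x σ) - 1 / 2)^2 = (r : ℝ) / 4 := by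
    have h14 : ∀ σ : Fin r, (occ (C x σ) - 1 / 2)^2 = (1 / 4 : ℝ) := by
      intro σ; unfold occ; split <;> norm_num
    rw [Finset.sum_congr rfl fun σ _ => h14 σ]
    simp only [Finset.sum_const, Finset.card_univ, Fintype.card_fin, nsmul_eq_mul]
    ring
  rw [hsum, hsq] at hId
  linarith

noncomputable def Qs {V : Type*} [Fintype V] (r : ℕ) (C : V → Fin r → Bool) : ℝ :=
  ∑ x : V, (nsite C x - r / 2)^2

noncomputable def Ss {V : Type*} [Fintype V] (G : SimpleGraph V) [DecidableRel G.Adj]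
    (r : ℕ) (C : V → Fin r → Bool) : ℝ :=
  ∑ x : V, ∑ y : V,
    (if G.Adj x y then ((nsite C x - r / 2) + (nsite C y - r / 2))^2 else 0)

lemma adj_row_sum {V : Type*} [Fintype V] (G : SimpleGraph V) [DecidableRel G.Adj]
    {z : ℕ} (hreg : G.IsRegularOfDegree z) (x : V) (c : ℝ) :
    ∑ y : V, (if G.Adj x y then c else 0) = z * c := by
  rw [← Finset.sum_filter]
  rw [Finset.sum_const]
  rw [← SimpleGraph.neighborFinset_eq_filter, ← SimpleGraph.degree, hreg x]
  simp [mul_comm]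

lemma H0_eq {V : Type*} [Fintype V] (G : SimpleGraph V) [DecidableRel G.Adj]
    {z : ℕ} (hreg : G.IsRegularOfDegree z) (r : ℕ) (I W : ℝ) (C : V → Fin r → Bool) :
    H0 G r I W C = W / 8 * Ss G r C + (I - z * W / 4) * Qs r C
      - I * (Fintype.card V) * r / 4 := by
  have hD : Ss G r C = 2 * z * Qs r C + 2 * (∑ x : V, ∑ y : V,
      (if G.Adj x y then (nsite C x - r / 2) * (nsite C y - r / 2) else 0)) := by
    unfold Ss
    have hterm : ∀ x y : V,
        (if G.Adj x y then ((nsite C x - r / 2) + (nsite C y - r / 2))^2 else 0)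
        = (if G.Adj x y then (nsite C x - r / 2)^2 else 0)
          + 2 * (if G.Adj x y then (nsite C x - r / 2) * (nsite C y - r / 2) else 0)
          + (if G.Adj x y then (nsite C y - r / 2)^2 else 0) := by
      intro x y; split <;> ring
    simp_rw [hterm, Finset.sum_add_distrib, ← Finset.mul_sum]
    have h1 : ∑ x : V, ∑ y : V, (if G.Adj x y then (nsite C x - r / 2)^2 else 0)
        = z * Qs r C := by
      simp_rw [adj_row_sum G hreg, ← Finset.mul_sum, Qs]
    have h2 : ∑ x : V, ∑ y : V, (if G.Adj x y then (nsite C y - r / 2)^2 else 0)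
        = z * Qs r C := by
      rw [Finset.sum_comm]
      have : ∀ y x : V, (if G.Adj x y then (nsite C y - r / 2)^2 else 0)
          = (if G.Adj y x then (nsite C y - r / 2)^2 else 0) := by
        intro y x; simp [SimpleGraph.adj_comm]
      simp_rw [this, adj_row_sum G hreg, ← Finset.mul_sum, Qs]
    rw [h1, h2]; ring
  unfold H0
  rw [Finset.sum_congr rfl fun x _ => sitesum C x]
  have hsite : ∑ x : V, ((nsite C x - r / 2)^2 - r / 4) / 2
      = (Qs r C - (Fintype.card V) * r / 4) / 2 := by
    rw [Qs, ← Finset.sum_div, Finset.sum_sub_distrib, Finset.sum_const, Finset.card_univ,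
      nsmul_eq_mul]
    ring
  rw [hsite]
  have hDs : (∑ x : V, ∑ y : V,
      (if G.Adj x y then (nsite C x - r / 2) * (nsite C y - r / 2) else 0))
      = Ss G r C / 2 - z * Qs r C := by linarith
  rw [hDs]
  ring

lemma sq_bound {V : Type*} {r : ℕ} (C : V → Fin r → Bool) (x : V) :
    (nsite C x - r / 2)^2 ≤ (r : ℝ)^2 / 4 := by
  nlinarith [nsite_nonneg C x, nsite_le C x,
    mul_nonneg (nsite_nonneg C x) (sub_nonneg.mpr (nsite_le C x))]

lemma Qs_le {V : Type*} [Fintype V] (r : ℕ) (C : V → Fin r → Bool) :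
    Qs r C ≤ (Fintype.card V) * (r : ℝ)^2 / 4 := by
  unfold Qs
  calc ∑ x : V, (nsite C x - r / 2)^2 ≤ ∑ _x : V, (r : ℝ)^2 / 4 :=
        Finset.sum_le_sum fun x _ => sq_bound C x
    _ = (Fintype.card V) * (r : ℝ)^2 / 4 := by
        rw [Finset.sum_const, Finset.card_univ, nsmul_eq_mul]; ring

lemma Ss_nonneg {V : Type*} [Fintype V] (G : SimpleGraph V) [DecidableRel G.Adj]
    (r : ℕ) (C : V → Fin r → Bool) : 0 ≤ Ss G r C :=
  Finset.sum_nonneg fun x _ => Finset.sum_nonneg fun y _ => by split <;> positivity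

lemma allones {V : Type*} {r : ℕ} (C : V → Fin r → Bool) (x : V)
    (h : nnat C x = r) (σ : Fin r) : C x σ = true := by
  have hle : ∀ τ ∈ (Finset.univ : Finset (Fin r)), (if C x τ then 1 else 0) ≤ 1 :=
    fun τ _ => by split <;> omega
  have hsum : ∑ τ : Fin r, (if C x τ then 1 else 0) = ∑ _τ : Fin r, 1 := by
    unfold nnat at h; rw [h]; simp
  have := (Finset.sum_eq_sum_iff_of_le hle).mp hsum σ (Finset.mem_univ σ)
  cases hcb : C x σ
  · rw [hcb] at this; simp at this
  · rfl

lemma allzeros {V : Type*} {r : ℕ} (C : V → Fin r → Bool) (x : V)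
    (h : nnat C x = 0) (σ : Fin r) : C x σ = false := by
  unfold nnat at h
  have := (Finset.sum_eq_zero_iff).mp h σ (Finset.mem_univ σ)
  cases hcb : C x σ
  · rfl
  · rw [hcb] at this; simp at this

lemma config_m {V : Type*} [DecidableEq V] {r : ℕ} (S : Finset V) (x : V) :
    nsite (fun x (_ : Fin r) => decide (x ∈ S)) x - r / 2
      = if x ∈ S then (r : ℝ) / 2 else -((r : ℝ) / 2) := by
  unfold nsite occ
  by_cases h : x ∈ S <;> simp [h] <;> ring

lemma config_Qs {V : Type*} [Fintype V] [DecidableEq V] (r : ℕ) (S : Finset V) :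
    Qs r (fun x (_ : Fin r) => decide (x ∈ S)) = (Fintype.card V) * (r : ℝ)^2 / 4 := by
  unfold Qs
  have : ∀ x : V, (nsite (fun x (_ : Fin r) => decide (x ∈ S)) x - r / 2)^2
      = (r : ℝ)^2 / 4 := by
    intro x; rw [config_m]; split <;> ring
  rw [Finset.sum_congr rfl fun x _ => this x, Finset.sum_const, Finset.card_univ, nsmul_eq_mul]
  ring

lemma config_Ss {V : Type*} [Fintype V] [DecidableEq V] (G : SimpleGraph V)
    [DecidableRel G.Adj] (r : ℕ) (S : Finset V)
    (halt : ∀ x y : V, G.Adj x y → (x ∈ S ↔ y ∉ S)) :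
    Ss G r (fun x (_ : Fin r) => decide (x ∈ S)) = 0 := by
  unfold Ss
  refine Finset.sum_eq_zero fun x _ => Finset.sum_eq_zero fun y _ => ?_
  by_cases hadj : G.Adj x y
  · rw [if_pos hadj, config_m, config_m]
    have hiff := halt x y hadj
    by_cases hx : x ∈ S
    · have hy : y ∉ S := hiff.mp hx
      rw [if_pos hx, if_neg hy]; ring
    · have hy : y ∈ S := not_not.mp (fun hy => hx (hiff.mpr hy))
      rw [if_neg hx, if_pos hy]; ring
  · rw [if_neg hadj]

set_option maxHeartbeats 2000000 in
/-- **Theorem 1(i).** For `W > 0` and `4I < zW`, `H_i^0` attains its minimum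
at exactly two configurations: all `r` ions on every site of one sublattice, the other
sublattice empty. -/
theorem statement5
    {V : Type*} [Fintype V] [DecidableEq V]
    (G : SimpleGraph V) [DecidableRel G.Adj]
    (z r : ℕ) (hz : 2 ≤ z) (hr : 2 ≤ r)
    (hreg : G.IsRegularOfDegree z) (hconn : G.Connected)
    (Λe Λo : Finset V)
    (hcover : ∀ v : V, v ∈ Λe ∨ v ∈ Λo) (hdisj : Disjoint Λe Λo)
    (hbip : ∀ x y : V, G.Adj x y → (x ∈ Λe ∧ y ∈ Λo) ∨ (x ∈ Λo ∧ y ∈ Λe))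
    (I W : ℝ) (hW : 0 < W) (hIW : 4 * I < (z : ℝ) * W) :
    {C : V → Fin r → Bool | ∀ C' : V → Fin r → Bool, H0 G r I W C ≤ H0 G r I W C'} =
      {fun x _ => decide (x ∈ Λe), fun x _ => decide (x ∈ Λo)} ∧
    (fun (x : V) (_ : Fin r) => decide (x ∈ Λe)) ≠
      (fun (x : V) (_ : Fin r) => decide (x ∈ Λo)) := by
  have hcoeff : 0 < (z : ℝ) * W / 4 - I := by linarith
  set Ce : V → Fin r → Bool := fun x _ => decide (x ∈ Λe) with hCedef
  set Co : V → Fin r → Bool := fun x _ => decide (x ∈ Λo) with hCodef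
  have halte : ∀ x y : V, G.Adj x y → (x ∈ Λe ↔ y ∉ Λe) := by
    intro x y hxy
    rcases hbip x y hxy with ⟨hxe, hyo⟩ | ⟨hxo, hye⟩
    · exact iff_of_true hxe (Finset.disjoint_right.mp hdisj hyo)
    · exact iff_of_false (Finset.disjoint_right.mp hdisj hxo) (not_not.mpr hye)
  have halto : ∀ x y : V, G.Adj x y → (x ∈ Λo ↔ y ∉ Λo) := by
    intro x y hxy
    rcases hbip x y hxy with ⟨hxe, hyo⟩ | ⟨hxo, hye⟩
    · exact iff_of_false (Finset.disjoint_left.mp hdisj hxe) (not_not.mpr hyo)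
    · exact iff_of_true hxo (Finset.disjoint_left.mp hdisj hye)
  -- the fundamental decomposition relative to either reference configuration
  have hlow : ∀ (Cr : V → Fin r → Bool), Qs r Cr = (Fintype.card V) * (r : ℝ)^2 / 4 →
      Ss G r Cr = 0 → ∀ C : V → Fin r → Bool,
      H0 G r I W C - H0 G r I W Cr
        = W / 8 * Ss G r C
          + ((z : ℝ) * W / 4 - I) * ((Fintype.card V) * (r : ℝ)^2 / 4 - Qs r C) := by
    intro Cr hQ hS C
    rw [H0_eq G hreg, H0_eq G hreg, hQ, hS]
    ring
  have hlowe := hlow Ce (config_Qs r Λe) (config_Ss G r Λe halte)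
  have hlowo := hlow Co (config_Qs r Λo) (config_Ss G r Λo halto)
  have hmin : ∀ C : V → Fin r → Bool, H0 G r I W Ce ≤ H0 G r I W C := by
    intro C
    have h := hlowe C
    have h1 : 0 ≤ W / 8 * Ss G r C := mul_nonneg (by linarith) (Ss_nonneg G r C)
    have h2 : 0 ≤ ((z : ℝ) * W / 4 - I) * ((Fintype.card V) * (r : ℝ)^2 / 4 - Qs r C) :=
      mul_nonneg (le_of_lt hcoeff) (by linarith [Qs_le r C])
    linarith
  have hoe : H0 G r I W Co = H0 G r I W Ce := by
    have h := hlowe Co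
    rw [config_Qs r Λo, config_Ss G r Λo halto] at h
    linarith
  obtain ⟨v0⟩ := hconn.nonempty
  refine ⟨?_, ?_⟩
  · ext C
    simp only [Set.mem_setOf_eq, Set.mem_insert_iff, Set.mem_singleton_iff]
    constructor
    · intro hC
      -- C is a minimizer, hence H0 C = H0 Ce and both nonneg parts vanish
      have hle : H0 G r I W C ≤ H0 G r I W Ce := hC Ce
      have h := hlowe C
      have h1 : 0 ≤ W / 8 * Ss G r C := mul_nonneg (by linarith) (Ss_nonneg G r C)
      have h2 : 0 ≤ ((z : ℝ) * W / 4 - I) * ((Fintype.card V) * (r : ℝ)^2 / 4 - Qs r C) :=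
        mul_nonneg (le_of_lt hcoeff) (by linarith [Qs_le r C])
      have hS1 : W / 8 * Ss G r C = 0 := by linarith
      have hQ1 : ((z : ℝ) * W / 4 - I) * ((Fintype.card V) * (r : ℝ)^2 / 4 - Qs r C) = 0 := by
        linarith
      have hS0 : Ss G r C = 0 := by
        rcases mul_eq_zero.mp hS1 with h' | h'
        · exact absurd h' (by positivity)
        · exact h'
      have hQ0 : Qs r C = (Fintype.card V) * (r : ℝ)^2 / 4 := by
        rcases mul_eq_zero.mp hQ1 with h' | h'
        · exact absurd h' (ne_of_gt hcoeff)
        · linarith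
      -- pointwise consequences
      have hQx : ∀ x : V, (nsite C x - r / 2)^2 = (r : ℝ)^2 / 4 := by
        have hsum0 : ∑ x : V, ((r : ℝ)^2 / 4 - (nsite C x - r / 2)^2) = 0 := by
          rw [Finset.sum_sub_distrib, Finset.sum_const, Finset.card_univ, nsmul_eq_mul]
          rw [Qs] at hQ0
          linarith
        intro x
        have := (Finset.sum_eq_zero_iff_of_nonneg
          (fun x _ => sub_nonneg.mpr (sq_bound C x))).mp hsum0 x (Finset.mem_univ x)
        linarith
      have hSxy : ∀ x y : V, G.Adj x y → nsite C x + nsite C y = r := by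
        have houter := (Finset.sum_eq_zero_iff_of_nonneg
          (fun x _ => Finset.sum_nonneg fun y _ => by split <;> positivity)).mp hS0
        intro x y hxy
        have hinner := (Finset.sum_eq_zero_iff_of_nonneg
          (fun y _ => by split <;> positivity)).mp
          (houter x (Finset.mem_univ x)) y (Finset.mem_univ y)
        rw [if_pos hxy] at hinner
        have := sq_eq_zero_iff.mp hinner
        linarith
      have h0r : ∀ x : V, nnat C x = 0 ∨ nnat C x = r := by
        intro x
        have h := hQx x
        rw [nsite_eq_nnat] at h
        have hfac : ((nnat C x : ℝ)) * ((nnat C x : ℝ) - r) = 0 := by linear_combination h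
        rcases mul_eq_zero.mp hfac with h' | h'
        · left; exact_mod_cast h'
        · right; have : ((nnat C x : ℝ)) = r := by linarith
          exact_mod_cast this
      have hadjP : ∀ x y : V, G.Adj x y →
          ((nnat C x = r ↔ x ∈ Λe) ↔ (nnat C y = r ↔ y ∈ Λe)) := by
        intro x y hxy
        have hxyr : nnat C x + nnat C y = r := by
          have := hSxy x y hxy
          rw [nsite_eq_nnat, nsite_eq_nnat] at this
          exact_mod_cast this
        have hx := h0r x
        have hy := h0r y
        have hkey : nnat C x = r ↔ ¬ nnat C y = r := by omega
        rcases hbip x y hxy with ⟨hxe, hyo⟩ | ⟨hxo, hye⟩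
        · have hyne : y ∉ Λe := Finset.disjoint_right.mp hdisj hyo
          tauto
        · have hxne : x ∉ Λe := Finset.disjoint_right.mp hdisj hxo
          tauto
      have hconst : ∀ x y : V, ((nnat C x = r ↔ x ∈ Λe) ↔ (nnat C y = r ↔ y ∈ Λe)) := by
        intro x y
        obtain ⟨w⟩ := hconn x y
        induction w with
        | nil => exact Iff.rfl
        | cons h p ih => exact (hadjP _ _ h).trans ih
      by_cases hc : nnat C v0 = r ↔ v0 ∈ Λe
      · left
        funext x σ
        have hx : nnat C x = r ↔ x ∈ Λe := by
          have := hconst x v0; tauto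
        by_cases hxe : x ∈ Λe
        · rw [allones C x (hx.mpr hxe) σ]
          simp [hCedef, hxe]
        · have hnr : nnat C x ≠ r := fun h' => hxe (hx.mp h')
          rw [allzeros C x ((h0r x).resolve_right hnr) σ]
          simp [hCedef, hxe]
      · right
        funext x σ
        have hx : ¬ (nnat C x = r ↔ x ∈ Λe) := by
          have := hconst x v0; tauto
        by_cases hxo : x ∈ Λo
        · have hxne : x ∉ Λe := Finset.disjoint_right.mp hdisj hxo
          have hxr : nnat C x = r := by tauto
          rw [allones C x hxr σ]
          simp [hCodef, hxo]
        · have hxe : x ∈ Λe := (hcover x).resolve_right hxo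
          have hnr : nnat C x ≠ r := by tauto
          rw [allzeros C x ((h0r x).resolve_right hnr) σ]
          simp [hCodef, hxo]
    · rintro (rfl | rfl)
      · exact hmin
      · intro C'
        rw [hoe]
        exact hmin C'
  · intro hEq
    have hv := congrFun (congrFun hEq v0) ⟨0, by omega⟩
    rw [hCedef, hCodef] at hv
    rcases hcover v0 with hv0 | hv0
    · have hno : v0 ∉ Λo := Finset.disjoint_left.mp hdisj hv0
      simp [hv0, hno] at hv
    · have hne : v0 ∉ Λe := Finset.disjoint_right.mp hdisj hv0
      simp [hv0, hne] at hv
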